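/- Let n ∈ ℕ and x₀ ∈ ℝ^n. Let f_N : ℝ^n → ℝ (N ∈ ℕ) be convex functions, each differentiable at x₀, converging pointwise on ℝ^n to a function f : ℝ^n → ℝ that is differentiable at x₀. Then ∇f_N(x₀) → ∇f(x₀) as N → ∞. -/

import Mathlib

open Filter Topology RealInnerProductSpace

/-- Key inequality: a convex function differentiable at a point lies above its tangent. -/
private lemma key_ineq {n : ℕ} {g : EuclideanSpace ℝ (Fin n) → ℝ}
    {x₀ : EuclideanSpace ℝ (Fin n)} (hc : ConvexOn ℝ Set.univ g)
    (hg : DifferentiableAt ℝ g x₀) (v : EuclideanSpace ℝ (Fin n)) :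
    ⟪gradient g x₀, v⟫ ≤ g (x₀ + v) - g x₀ := by
  set φ : ℝ → ℝ := fun t => g (x₀ + t • v) with hφ
  have hψ : HasDerivAt (fun t : ℝ => x₀ + t • v) v 0 := by
    simpa using ((hasDerivAt_id (0:ℝ)).smul_const v).const_add x₀
  have hder : HasDerivAt φ ⟪gradient g x₀, v⟫ 0 := by
    have hF : HasFDerivAt g (InnerProductSpace.toDual ℝ _ (gradient g x₀)) (x₀ + (0:ℝ) • v) := by
      simpa using hg.hasGradientAt.hasFDerivAt
    have := hF.comp_hasDerivAt 0 hψ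
    rw [InnerProductSpace.toDual_apply_apply] at this
    exact this
  have hφc : ConvexOn ℝ Set.univ φ := by
    have h2 : ConvexOn ℝ Set.univ fun x : ℝ => g (x • v + x₀) := by
      have := hc.comp_affineMap (AffineMap.lineMap (x₀ : EuclideanSpace ℝ (Fin n)) (x₀ + v))
      simpa [Function.comp_def, AffineMap.lineMap_apply, add_sub_cancel_left] using this
    have heq : (fun t : ℝ => g (x₀ + t • v)) = fun x : ℝ => g (x • v + x₀) := by
      ext t; rw [add_comm]
    rw [hφ, heq]; exact h2
  have h := hφc.le_slope_of_hasDerivAt (Set.mem_univ (0:ℝ)) (Set.mem_univ 1) one_pos hder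
  simpa [slope, hφ] using h

/-- Eventual one-sided bound on directional derivatives. -/
private lemma dir_bound {n : ℕ} {x₀ : EuclideanSpace ℝ (Fin n)}
    {fN : ℕ → EuclideanSpace ℝ (Fin n) → ℝ} {f : EuclideanSpace ℝ (Fin n) → ℝ}
    (hconv : ∀ N, ConvexOn ℝ Set.univ (fN N))
    (hdN : ∀ N, DifferentiableAt ℝ (fN N) x₀)
    (hd : DifferentiableAt ℝ f x₀)
    (hptwise : ∀ x, Tendsto (fun N => fN N x) atTop (𝓝 (f x)))
    (v : EuclideanSpace ℝ (Fin n)) {ε : ℝ} (hε : 0 < ε) :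
    ∀ᶠ N in atTop, ⟪gradient (fN N) x₀, v⟫ ≤ ⟪gradient f x₀, v⟫ + ε := by
  set c : ℝ := ⟪gradient f x₀, v⟫ with hc
  set φ : ℝ → ℝ := fun t => f (x₀ + t • v) with hφ
  have hψ : HasDerivAt (fun t : ℝ => x₀ + t • v) v 0 := by
    simpa using ((hasDerivAt_id (0:ℝ)).smul_const v).const_add x₀
  have hder : HasDerivAt φ c 0 := by
    have hF : HasFDerivAt f (InnerProductSpace.toDual ℝ _ (gradient f x₀)) (x₀ + (0:ℝ) • v) := by
      simpa using hd.hasGradientAt.hasFDerivAt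
    have := hF.comp_hasDerivAt 0 hψ
    rw [InnerProductSpace.toDual_apply_apply] at this
    exact this
  have hslope : Tendsto (slope φ 0) (𝓝[>] (0:ℝ)) (𝓝 c) :=
    (hasDerivAt_iff_tendsto_slope.mp hder).mono_left
      (nhdsWithin_mono 0 (fun t ht => ne_of_gt ht))
  -- pick t > 0 with slope close to c
  obtain ⟨t, hts, ht0⟩ :=
    ((hslope.eventually (eventually_lt_nhds (by linarith : c < c + ε/2))).and
      self_mem_nhdsWithin).exists
  have ht : (0:ℝ) < t := ht0
  -- pointwise convergence of the difference quotient
  have htend : Tendsto (fun N => (fN N (x₀ + t • v) - fN N x₀) / t) atTop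
      (𝓝 ((f (x₀ + t • v) - f x₀) / t)) :=
    ((hptwise _).sub (hptwise _)).div_const t
  have hslope_eq : (f (x₀ + t • v) - f x₀) / t = slope φ 0 t := by
    simp [slope, hφ, div_eq_inv_mul]
  have hev : ∀ᶠ N in atTop,
      (fN N (x₀ + t • v) - fN N x₀) / t < (f (x₀ + t • v) - f x₀) / t + ε/2 :=
    htend.eventually_lt_const (by linarith)
  filter_upwards [hev] with N hN
  have h1 : ⟪gradient (fN N) x₀, t • v⟫ ≤ fN N (x₀ + t • v) - fN N x₀ :=
    key_ineq (hconv N) (hdN N) (t • v)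
  have h2 : t * ⟪gradient (fN N) x₀, v⟫ ≤ fN N (x₀ + t • v) - fN N x₀ := by
    rwa [real_inner_smul_right] at h1
  have h3 : ⟪gradient (fN N) x₀, v⟫ ≤ (fN N (x₀ + t • v) - fN N x₀) / t := by
    rw [le_div_iff₀ ht]; linarith [h2]
  have h4 : slope φ 0 t < c + ε/2 := hts
  have hfin : ⟪gradient (fN N) x₀, v⟫ < c + ε :=
    calc ⟪gradient (fN N) x₀, v⟫ ≤ (fN N (x₀ + t • v) - fN N x₀) / t := h3
      _ < (f (x₀ + t • v) - f x₀) / t + ε/2 := hN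
      _ = slope φ 0 t + ε/2 := by rw [hslope_eq]
      _ ≤ c + ε := by linarith
  exact hfin.le

/-- If convex functions `f_N : ℝ^n → ℝ`, each differentiable at `x₀`,
converge pointwise to a function `f` differentiable at `x₀`, then `∇f_N(x₀) → ∇f(x₀)`. -/
theorem stmt10 {n : ℕ} (x₀ : EuclideanSpace ℝ (Fin n))
    (fN : ℕ → EuclideanSpace ℝ (Fin n) → ℝ) (f : EuclideanSpace ℝ (Fin n) → ℝ)
    (hconv : ∀ N, ConvexOn ℝ Set.univ (fN N))
    (hdN : ∀ N, DifferentiableAt ℝ (fN N) x₀)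
    (hd : DifferentiableAt ℝ f x₀)
    (hptwise : ∀ x, Tendsto (fun N => fN N x) atTop (𝓝 (f x))) :
    Tendsto (fun N => gradient (fN N) x₀) atTop (𝓝 (gradient f x₀)) := by
  have hB : ∀ v : EuclideanSpace ℝ (Fin n),
      Tendsto (fun N => ⟪gradient (fN N) x₀, v⟫) atTop (𝓝 ⟪gradient f x₀, v⟫) := by
    intro v
    rw [Metric.tendsto_atTop]
    intro ε hε
    have hupper := dir_bound hconv hdN hd hptwise v (half_pos hε)
    have hlower := dir_bound hconv hdN hd hptwise (-v) (half_pos hε)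
    obtain ⟨K, hK⟩ := (hupper.and hlower).exists_forall_of_atTop
    refine ⟨K, fun N hN => ?_⟩
    obtain ⟨hu, hl⟩ := hK N hN
    rw [inner_neg_right, inner_neg_right] at hl
    rw [Real.dist_eq, abs_sub_lt_iff]
    constructor <;> linarith
  have hsum : ∀ w : EuclideanSpace ℝ (Fin n),
      ∑ i, ⟪w, EuclideanSpace.basisFun (Fin n) ℝ i⟫ • EuclideanSpace.basisFun (Fin n) ℝ i = w := by
    intro w
    have := (EuclideanSpace.basisFun (Fin n) ℝ).sum_repr' w
    simpa [real_inner_comm] using this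
  have htend : Tendsto
      (fun N => ∑ i, ⟪gradient (fN N) x₀, EuclideanSpace.basisFun (Fin n) ℝ i⟫ •
        EuclideanSpace.basisFun (Fin n) ℝ i) atTop
      (𝓝 (∑ i, ⟪gradient f x₀, EuclideanSpace.basisFun (Fin n) ℝ i⟫ •
        EuclideanSpace.basisFun (Fin n) ℝ i)) :=
    tendsto_finset_sum _ fun i _ => (hB _).smul_const _
  rw [hsum (gradient f x₀)] at htend
  convert htend using 2 with N
  exact (hsum _).symm
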